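/- Let m ≥ 1 and let δ₁ ≥ δ₂ ≥ ⋯ be the values log(1 + 1/z) for z ∈ Z = {q + ⋯ + q^k : q prime, k ≥ 1} listed in decreasing order (counted with multiplicity over pairs (q,k)). If n_m = ∏_p p^{k_p} where k_p is the number of indices i ≤ m whose pair has first coordinate p, then for every integer n ≥ 2 whose total number of prime factors counted with multiplicity equals m, σ(n_m)/n_m ≥ σ(n)/n. -/

import Mathlib

open Finset ArithmeticFunction

noncomputable def LRr (p k : ℕ) : ℝ := 1 + 1 / ∑ t ∈ Finset.Icc 1 k, (p : ℝ) ^ t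

lemma LRr_one_le (p k : ℕ) : 1 ≤ LRr p k := by
  have h : (0:ℝ) ≤ ∑ t ∈ Finset.Icc 1 k, (p:ℝ)^t :=
    Finset.sum_nonneg fun t _ => by positivity
  have := one_div_nonneg.mpr h
  unfold LRr; linarith

lemma LRr_pos (p k : ℕ) : 0 < LRr p k := lt_of_lt_of_le one_pos (LRr_one_le p k)

lemma LRS_pos {p : ℕ} (hp : 1 ≤ p) {k : ℕ} (hk : 1 ≤ k) :
    0 < ∑ t ∈ Finset.Icc 1 k, (p:ℝ)^t := by
  have hp' : (0:ℝ) < p := by exact_mod_cast hp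
  apply Finset.sum_pos (fun t _ => by positivity)
  exact ⟨1, Finset.mem_Icc.mpr ⟨le_refl 1, hk⟩⟩

lemma LRr_anti {p : ℕ} (hp : 1 ≤ p) : Antitone (fun i => LRr p (i+1)) := by
  apply antitone_nat_of_succ_le
  intro i
  unfold LRr
  have h1 : 0 < ∑ t ∈ Finset.Icc 1 (i+1), (p:ℝ)^t := LRS_pos hp (by omega)
  have h2 : ∑ t ∈ Finset.Icc 1 (i+1), (p:ℝ)^t ≤ ∑ t ∈ Finset.Icc 1 (i+1+1), (p:ℝ)^t := by
    apply Finset.sum_le_sum_of_subset_of_nonneg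
    · exact Finset.Icc_subset_Icc_right (by omega)
    · intro t _ _; positivity
  have := one_div_le_one_div_of_le h1 h2
  linarith

lemma LRIcc_range {M : Type*} [CommMonoid M] (f : ℕ → M) (K : ℕ) :
    ∏ j ∈ Finset.Icc 1 K, f j = ∏ i ∈ Finset.range K, f (i+1) := by
  induction K with
  | zero => simp
  | succ K ih => rw [Finset.prod_Icc_succ_top (by omega), ih, Finset.prod_range_succ]

lemma LRIcc_range_sum (f : ℕ → ℝ) (K : ℕ) :
    ∑ j ∈ Finset.Icc 1 K, f j = ∑ i ∈ Finset.range K, f (i+1) :=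
  LRIcc_range (M := Multiplicative ℝ) f K

lemma LRtele {p : ℕ} (hp : p.Prime) (k : ℕ) :
    ((sigma 1 (p^k) : ℕ) : ℝ) / ((p^k : ℕ) : ℝ) = ∏ j ∈ Finset.Icc 1 k, LRr p j := by
  have hp1 : (1:ℝ) ≤ (p:ℝ) := by exact_mod_cast hp.one_lt.le
  have hA : ∀ j : ℕ, ((sigma 1 (p^j) : ℕ) : ℝ) = ∑ t ∈ Finset.range (j+1), (p:ℝ)^t := by
    intro j
    rw [sigma_one_apply_prime_pow hp]
    push_cast
    rfl
  have hApos : ∀ j : ℕ, (0:ℝ) < ∑ t ∈ Finset.range (j+1), (p:ℝ)^t := by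
    intro j
    apply Finset.sum_pos (fun t _ => by positivity)
    exact ⟨0, Finset.mem_range.mpr (by omega)⟩
  induction k with
  | zero => simp [sigma_one_apply]
  | succ k ih =>
    have hS : ∑ t ∈ Finset.Icc 1 (k+1), (p:ℝ)^t
        = (p:ℝ) * ∑ t ∈ Finset.range (k+1), (p:ℝ)^t := by
      rw [LRIcc_range_sum, Finset.mul_sum]
      exact Finset.sum_congr rfl fun t _ => by rw [pow_succ']
    rw [Finset.prod_Icc_succ_top (by omega), ← ih, hA (k+1), hA k]
    unfold LRr
    rw [hS]
    have hpk : (0:ℝ) < ((p^k : ℕ):ℝ) := by exact_mod_cast pow_pos hp.pos k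
    have hAk := hApos k
    have hAk1 := hApos (k+1)
    have hrange : ∑ t ∈ Finset.range (k+1+1), (p:ℝ)^t
        = 1 + (p:ℝ) * ∑ t ∈ Finset.range (k+1), (p:ℝ)^t := by
      rw [Finset.sum_range_succ', add_comm, Finset.mul_sum]
      congr 1
      exact Finset.sum_congr rfl fun t _ => by rw [pow_succ']
    push_cast
    rw [hrange]
    field_simp
    ring

lemma LRprodLe (g : ℕ → ℝ) (hg1 : ∀ i, 1 ≤ g i) (hga : Antitone g) :
    ∀ (m : ℕ) (T : Finset ℕ), T.card = m → ∏ t ∈ T, g t ≤ ∏ i ∈ Finset.range m, g i := by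
  intro m
  induction m with
  | zero =>
    intro T hT
    rw [Finset.card_eq_zero.mp hT]
    simp
  | succ m ih =>
    intro T hT
    have hne : T.Nonempty := Finset.card_pos.mp (by omega)
    set t := T.max' hne with ht
    have htmem : t ∈ T := T.max'_mem hne
    have hsub : T ⊆ Finset.range (t+1) := by
      intro x hx
      exact Finset.mem_range.mpr (by have := Finset.le_max' T x hx; omega)
    have htm : m ≤ t := by
      have := Finset.card_le_card hsub
      rw [hT, Finset.card_range] at this
      omega
    have hcard : (T.erase t).card = m := by rw [Finset.card_erase_of_mem htmem, hT]; omega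
    rw [← Finset.mul_prod_erase T g htmem, Finset.prod_range_succ, mul_comm (∏ i ∈ Finset.range m, g i) (g m)]
    apply mul_le_mul (hga htm) (ih _ hcard)
    · exact Finset.prod_nonneg fun i _ => le_trans zero_le_one (hg1 i)
    · exact le_trans zero_le_one (hg1 m)

lemma LRprodIcc {p : ℕ} (hp : 1 ≤ p) (J : Finset ℕ) (hJ : ∀ j ∈ J, 1 ≤ j) :
    ∏ j ∈ J, LRr p j ≤ ∏ j ∈ Finset.Icc 1 J.card, LRr p j := by
  rw [LRIcc_range]
  have hinj : Set.InjOn (· - 1) J := by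
    intro a ha b hb hab
    have := hJ a ha; have := hJ b hb
    simp only at hab
    omega
  have hcard : (J.image (· - 1)).card = J.card := Finset.card_image_of_injOn hinj
  have h1 : ∏ j ∈ J, LRr p j = ∏ t ∈ J.image (· - 1), LRr p (t+1) := by
    rw [Finset.prod_image hinj]
    exact Finset.prod_congr rfl fun j hj => by have := hJ j hj; congr 1; omega
  rw [h1]
  exact LRprodLe (fun i => LRr p (i+1)) (fun i => LRr_one_le _ _) (LRr_anti hp) _ _ hcard

lemma LROmega {n : ℕ} : cardFactors n = ∑ p ∈ n.primeFactors, n.factorization p := by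
  rw [cardFactors_apply]
  have : n.primeFactors = n.primeFactorsList.toFinset := rfl
  rw [this]
  have h := Multiset.toFinset_sum_count_eq (↑n.primeFactorsList : Multiset ℕ)
  simp only [Multiset.coe_count, Multiset.coe_card] at h
  rw [show (↑n.primeFactorsList : Multiset ℕ).toFinset = n.primeFactorsList.toFinset from rfl] at h
  rw [← h]
  exact Finset.sum_congr rfl fun p _ => Nat.primeFactorsList_count_eq

lemma LRsigma_div {n : ℕ} (hn : n ≠ 0) :
    ((sigma 1 n : ℕ) : ℝ) / (n : ℝ)
      = ∏ p ∈ n.primeFactors, ∏ j ∈ Finset.Icc 1 (n.factorization p), LRr p j := by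
  have h1 : sigma 1 n = ∏ p ∈ n.primeFactors, sigma 1 (p ^ n.factorization p) := by
    rw [isMultiplicative_sigma.multiplicative_factorization _ hn]
    rfl
  have h2 : (n : ℝ) = ∏ p ∈ n.primeFactors, ((p ^ n.factorization p : ℕ) : ℝ) := by
    rw [← Nat.cast_prod]
    congr 1
    conv_lhs => rw [← Nat.factorization_prod_pow_eq_self hn]
    rfl
  rw [h1, h2, Nat.cast_prod, ← Finset.prod_div_distrib]
  exact Finset.prod_congr rfl fun p hp =>
    LRtele (Nat.prime_of_mem_primeFactors hp) _
theorem LR_number_maximizes_rho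
    (e : ℕ ≃ {x : ℕ × ℕ // x.1.Prime ∧ 1 ≤ x.2})
    (hanti : ∀ i j : ℕ, i ≤ j →
      Real.log (1 + 1 / ∑ t ∈ Finset.Icc 1 (e j).1.2, ((e j).1.1 : ℝ) ^ t) ≤
        Real.log (1 + 1 / ∑ t ∈ Finset.Icc 1 (e i).1.2, ((e i).1.1 : ℝ) ^ t))
    (m : ℕ) (hm : 1 ≤ m) (n : ℕ) (hn : 2 ≤ n)
    (hΩ : cardFactors n = m) :
    (sigma 1 n : ℝ) / (n : ℝ) ≤
      (sigma 1 (∏ i ∈ Finset.range m, (e i).1.1) : ℝ) /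
        ((∏ i ∈ Finset.range m, (e i).1.1 : ℕ) : ℝ) := by
  classical
  have hqprime : ∀ i, ((e i).1.1).Prime := fun i => (e i).2.1
  have hk1 : ∀ i, 1 ≤ (e i).1.2 := fun i => (e i).2.2
  set g : ℕ → ℝ := fun i => LRr (e i).1.1 (e i).1.2 with hg_def
  have hg1 : ∀ i, 1 ≤ g i := fun i => LRr_one_le _ _
  have hganti : Antitone g := by
    intro i j hij
    have h := hanti i j hij
    exact (Real.log_le_log_iff (LRr_pos (e j).1.1 (e j).1.2) (LRr_pos (e i).1.1 (e i).1.2)).mp h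
  set N := ∏ i ∈ Finset.range m, (e i).1.1 with hN_def
  have hN0 : N ≠ 0 := Finset.prod_ne_zero_iff.mpr fun i _ => (hqprime i).pos.ne'
  have hn0 : n ≠ 0 := by omega
  -- Step A
  set P : Finset (ℕ × ℕ) :=
    n.primeFactors.biUnion (fun p => {p} ×ˢ Finset.Icc 1 (n.factorization p)) with hP
  have hPdisj : ∀ p ∈ n.primeFactors, ∀ p' ∈ n.primeFactors, p ≠ p' →
      Disjoint ({p} ×ˢ Finset.Icc 1 (n.factorization p))
        ({p'} ×ˢ Finset.Icc 1 (n.factorization p')) := by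
    intro p _ p' _ hne
    simp only [Finset.disjoint_left, Finset.mem_product, Finset.mem_singleton]
    rintro x ⟨h1, -⟩ ⟨h2, -⟩
    exact hne (h1 ▸ h2)
  have hPmem : ∀ s ∈ P, s.1.Prime ∧ 1 ≤ s.2 := by
    intro s hs
    simp only [hP, Finset.mem_biUnion, Finset.mem_product, Finset.mem_singleton,
      Finset.mem_Icc] at hs
    obtain ⟨p, hp, h1, h2, -⟩ := hs
    exact ⟨h1 ▸ Nat.prime_of_mem_primeFactors hp, h2⟩
  have hPcard : P.card = m := by
    rw [hP, Finset.card_biUnion hPdisj, ← hΩ, LROmega]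
    apply Finset.sum_congr rfl
    intro p _
    rw [Finset.card_product, Finset.card_singleton, Nat.card_Icc]
    omega
  have hLHS : ((sigma 1 n : ℕ) : ℝ) / (n : ℝ) = ∏ s ∈ P, LRr s.1 s.2 := by
    rw [LRsigma_div hn0, hP, Finset.prod_biUnion hPdisj]
    apply Finset.prod_congr rfl
    intro p _
    rw [Finset.prod_product]
    simp
  set F : {s // s ∈ P} → ℕ := fun s => e.symm ⟨s.1, hPmem s.1 s.2⟩ with hF
  have hFinj : Function.Injective F := by
    intro a b hab
    have h2 := e.symm.injective hab
    have h3 : (⟨a.1, hPmem a.1 a.2⟩ : {x : ℕ × ℕ // x.1.Prime ∧ 1 ≤ x.2}).1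
        = (⟨b.1, hPmem b.1 b.2⟩ : {x : ℕ × ℕ // x.1.Prime ∧ 1 ≤ x.2}).1 := by rw [h2]
    exact Subtype.ext h3
  set T := P.attach.image F with hT
  have hTcard : T.card = m := by
    rw [hT, Finset.card_image_of_injective _ hFinj, Finset.card_attach, hPcard]
  have hTprod : ∏ t ∈ T, g t = ∏ s ∈ P, LRr s.1 s.2 := by
    rw [hT, Finset.prod_image (fun a _ b _ h => hFinj h),
      ← Finset.prod_attach P (fun s => LRr s.1 s.2)]
    apply Finset.prod_congr rfl
    intro s _
    simp only [hg_def, hF, Equiv.apply_symm_apply]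
  have stepA : ((sigma 1 n : ℕ) : ℝ) / (n : ℝ) ≤ ∏ i ∈ Finset.range m, g i := by
    rw [hLHS, ← hTprod]
    exact LRprodLe g hg1 hganti m T hTcard
  -- Step B
  have hfact : ∀ p, N.factorization p
      = ((Finset.range m).filter (fun i => (e i).1.1 = p)).card := by
    intro p
    rw [hN_def, Nat.factorization_prod (fun i _ => (hqprime i).pos.ne'),
      Finsupp.finset_sum_apply, Finset.card_filter]
    apply Finset.sum_congr rfl
    intro i _
    rw [(hqprime i).factorization, Finsupp.single_apply]
  have hB : N.primeFactors = (Finset.range m).image (fun i => (e i).1.1) := by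
    ext p
    rw [← Nat.support_factorization, Finsupp.mem_support_iff, hfact p]
    simp only [ne_eq, Finset.card_eq_zero, ← Finset.not_nonempty_iff_eq_empty, not_not,
      Finset.filter_nonempty_iff, Finset.mem_image, Finset.mem_range]
  have stepB : ∏ i ∈ Finset.range m, g i ≤ ((sigma 1 N : ℕ) : ℝ) / (N : ℝ) := by
    rw [LRsigma_div hN0, hB,
      ← Finset.prod_fiberwise_of_maps_to
        (g := fun i => (e i).1.1)
        (fun i hi => Finset.mem_image_of_mem (fun i => (e i).1.1) hi) g]
    apply Finset.prod_le_prod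
    · intro p _
      exact Finset.prod_nonneg fun i _ => le_trans zero_le_one (hg1 i)
    · intro p hp
      obtain ⟨i0, -, hi0⟩ := Finset.mem_image.mp hp
      have hpprime : p.Prime := hi0 ▸ hqprime i0
      set Fp := (Finset.range m).filter (fun i => (e i).1.1 = p) with hFp
      have hinj : Set.InjOn (fun i => (e i).1.2) Fp := by
        intro a ha b hb hab
        have ha' : (e a).1.1 = p := (Finset.mem_filter.mp ha).2
        have hb' : (e b).1.1 = p := (Finset.mem_filter.mp hb).2
        apply e.injective
        apply Subtype.ext
        apply Prod.ext
        · rw [ha', hb']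
        · exact hab
      have h1 : ∏ i ∈ Fp, g i = ∏ j ∈ Fp.image (fun i => (e i).1.2), LRr p j := by
        rw [Finset.prod_image hinj]
        apply Finset.prod_congr rfl
        intro i hi
        simp only [hg_def]
        rw [(Finset.mem_filter.mp hi).2]
      have hcard : (Fp.image (fun i => (e i).1.2)).card = N.factorization p := by
        rw [Finset.card_image_of_injOn hinj, hfact p]
      have hge1 : ∀ j ∈ Fp.image (fun i => (e i).1.2), 1 ≤ j := by
        intro j hj
        obtain ⟨i, -, rfl⟩ := Finset.mem_image.mp hj
        exact hk1 i
      calc ∏ i ∈ Fp, g i = ∏ j ∈ Fp.image (fun i => (e i).1.2), LRr p j := h1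
        _ ≤ ∏ j ∈ Finset.Icc 1 (Fp.image (fun i => (e i).1.2)).card, LRr p j :=
            LRprodIcc hpprime.one_lt.le _ hge1
        _ = ∏ j ∈ Finset.Icc 1 (N.factorization p), LRr p j := by rw [hcard]
  exact stepA.trans stepB
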